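/- The function I(x) = log(cosh x)/x is concave on (0,∞); that is, for all x₁, x₂ > 0 and all t ∈ [0,1], I(t·x₁ + (1−t)·x₂) ≥ t·I(x₁) + (1−t)·I(x₂). -/

import Mathlib

open Real Set

private noncomputable def lcAux (x : ℝ) : ℝ :=
  x ^ 2 / Real.cosh x ^ 2 - 2 * x * (Real.sinh x / Real.cosh x) + 2 * Real.log (Real.cosh x)

private lemma lcAux_hasDerivAt (x : ℝ) :
    HasDerivAt lcAux (-2 * x ^ 2 * Real.sinh x / Real.cosh x ^ 3) x := by
  have hc : Real.cosh x ≠ 0 := (Real.cosh_pos x).ne'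
  have h1 : HasDerivAt (fun x => x ^ 2 / Real.cosh x ^ 2)
      ((2 * x ^ 1 * Real.cosh x ^ 2 - x ^ 2 * (2 * Real.cosh x ^ 1 * Real.sinh x)) /
        (Real.cosh x ^ 2) ^ 2) x := by
    exact (hasDerivAt_pow 2 x).div ((Real.hasDerivAt_cosh x).pow 2) (pow_ne_zero _ hc)
  have h2 : HasDerivAt (fun x => Real.sinh x / Real.cosh x)
      ((Real.cosh x * Real.cosh x - Real.sinh x * Real.sinh x) / Real.cosh x ^ 2) x :=
    (Real.hasDerivAt_sinh x).div (Real.hasDerivAt_cosh x) hc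
  have h3 : HasDerivAt (fun x => 2 * x * (Real.sinh x / Real.cosh x))
      (2 * (Real.sinh x / Real.cosh x) + 2 * x *
        ((Real.cosh x * Real.cosh x - Real.sinh x * Real.sinh x) / Real.cosh x ^ 2)) x := by
    simpa using (((hasDerivAt_id x).const_mul 2).fun_mul h2)
  have h4 : HasDerivAt (fun x => 2 * Real.log (Real.cosh x))
      (2 * (Real.sinh x / Real.cosh x)) x := by
    simpa [div_eq_mul_inv, mul_comm] using ((Real.hasDerivAt_cosh x).log hc).const_mul 2
  have := (h1.sub h3).add h4
  refine HasDerivAt.congr_deriv this ?_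
  rw [show Real.cosh x * Real.cosh x - Real.sinh x * Real.sinh x = 1 from by
    nlinarith [Real.cosh_sq_sub_sinh_sq x]]
  field_simp
  ring

private lemma lcAux_nonpos {x : ℝ} (hx : 0 < x) : lcAux x ≤ 0 := by
  have hanti : AntitoneOn lcAux (Ici 0) := by
    apply antitoneOn_of_deriv_nonpos (convex_Ici 0)
    · exact fun y _ => (lcAux_hasDerivAt y).continuousAt.continuousWithinAt
    · exact fun y _ => (lcAux_hasDerivAt y).differentiableAt.differentiableWithinAt
    · intro y hy
      rw [interior_Ici] at hy
      rw [(lcAux_hasDerivAt y).deriv]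
      have hs : 0 ≤ Real.sinh y := Real.sinh_nonneg_iff.2 hy.le
      have hc : 0 < Real.cosh y ^ 3 := by positivity
      apply div_nonpos_of_nonpos_of_nonneg _ hc.le
      nlinarith [sq_nonneg y]
  have h0 : lcAux 0 = 0 := by simp [lcAux]
  calc lcAux x ≤ lcAux 0 := hanti (le_refl (0:ℝ)) hx.le hx.le
    _ = 0 := h0

theorem log_cosh_div_self_concaveOn :
    ConcaveOn ℝ (Ioi (0:ℝ)) (fun x => Real.log (Real.cosh x) / x) := by
  apply concaveOn_of_hasDerivWithinAt2_nonpos (convex_Ioi 0)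
    (f' := fun x => (x * (Real.sinh x / Real.cosh x) - Real.log (Real.cosh x)) / x ^ 2)
    (f'' := fun x => lcAux x / x ^ 3)
  · apply ContinuousOn.div
    · exact (Real.continuous_cosh.log fun x => (Real.cosh_pos x).ne').continuousOn
    · exact continuousOn_id
    · exact fun x hx => ne_of_gt hx
  · intro x hx
    rw [interior_Ioi] at hx
    have hc : Real.cosh x ≠ 0 := (Real.cosh_pos x).ne'
    have h : HasDerivAt (fun x => Real.log (Real.cosh x) / x)
        ((Real.sinh x / Real.cosh x * x - Real.log (Real.cosh x) * 1) / x ^ 2) x :=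
      ((Real.hasDerivAt_cosh x).log hc).div (hasDerivAt_id x) hx.ne'
    rw [interior_Ioi]
    refine (h.congr_deriv ?_).hasDerivWithinAt
    ring
  · intro x hx
    rw [interior_Ioi] at hx
    have hc : Real.cosh x ≠ 0 := (Real.cosh_pos x).ne'
    have hN : HasDerivAt (fun x => x * (Real.sinh x / Real.cosh x) - Real.log (Real.cosh x))
        (1 * (Real.sinh x / Real.cosh x) + x *
          ((Real.cosh x * Real.cosh x - Real.sinh x * Real.sinh x) / Real.cosh x ^ 2)
          - Real.sinh x / Real.cosh x) x := by
      exact ((hasDerivAt_id x).mul ((Real.hasDerivAt_sinh x).div (Real.hasDerivAt_cosh x) hc)).sub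
        ((Real.hasDerivAt_cosh x).log hc)
    have h : HasDerivAt
        (fun x => (x * (Real.sinh x / Real.cosh x) - Real.log (Real.cosh x)) / x ^ 2)
        (((1 * (Real.sinh x / Real.cosh x) + x *
          ((Real.cosh x * Real.cosh x - Real.sinh x * Real.sinh x) / Real.cosh x ^ 2)
          - Real.sinh x / Real.cosh x) * x ^ 2 -
          (x * (Real.sinh x / Real.cosh x) - Real.log (Real.cosh x)) * (2 * x ^ 1)) /
          (x ^ 2) ^ 2) x :=
      hN.div (hasDerivAt_pow 2 x) (pow_ne_zero _ hx.ne')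
    rw [interior_Ioi]
    refine (h.congr_deriv ?_).hasDerivWithinAt
    rw [show Real.cosh x * Real.cosh x - Real.sinh x * Real.sinh x = 1 from by
      nlinarith [Real.cosh_sq_sub_sinh_sq x]]
    have hx0 : x ≠ 0 := ne_of_gt hx
    simp only [lcAux]
    field_simp
    ring
  · intro x hx
    rw [interior_Ioi] at hx
    have h3 : (0:ℝ) < x ^ 3 := pow_pos hx 3
    exact div_nonpos_of_nonpos_of_nonneg (lcAux_nonpos hx) h3.le
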